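/- Let x̃ be a nonzero integer and x = x̃([1̄] − [0̄]) ∈ R = ℤ[ℤ/fℤ]. Then the quotient K/xR of the augmentation ideal K by the ideal xR = {xy : y ∈ R} is isomorphic, as a module over ℤ[ℤ/fℤ], to (ℤ/x̃ℤ) ⊗_ℤ K, where the ℤ/fℤ-action on the tensor product is induced by the action on the factor K. -/

import Mathlib

open TensorProduct

/-- The basis element `[k̄]` of the integral group ring `ℤ[ℤ/fℤ]`. -/
noncomputable def bas (f : ℕ) (k : ZMod f) : MonoidAlgebra ℤ (Multiplicative (ZMod f)) :=
  MonoidAlgebra.of ℤ (Multiplicative (ZMod f)) (Multiplicative.ofAdd k)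

/-- The augmentation `ε : ℤ[ℤ/fℤ] → ℤ` as a ring homomorphism. -/
noncomputable def aug (f : ℕ) : MonoidAlgebra ℤ (Multiplicative (ZMod f)) →ₐ[ℤ] ℤ :=
  MonoidAlgebra.lift ℤ ℤ (Multiplicative (ZMod f)) 1

/-- The augmentation ideal `K = ker ε` of `ℤ[ℤ/fℤ]`, as an ideal (hence an
`ℤ[ℤ/fℤ]`-module, the action being by multiplication). -/
noncomputable def augIdeal (f : ℕ) : Ideal (MonoidAlgebra ℤ (Multiplicative (ZMod f))) :=
  RingHom.ker (aug f).toRingHom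

lemma aug_bas (f : ℕ) (k : ZMod f) : aug f (bas f k) = 1 := by
  simp [aug, bas, MonoidAlgebra.lift_of]

lemma bas_zero (f : ℕ) : bas f 0 = 1 := by
  simp [bas]
  rfl

lemma bas_mul (f : ℕ) (a b : ZMod f) : bas f a * bas f b = bas f (a + b) := by
  simp [bas, ← map_mul, ← ofAdd_add]

lemma bas_sub_mem_span (f : ℕ) (hf : f ≠ 0) (k : ZMod f) :
    bas f k - bas f 0 ∈ Ideal.span {bas f 1 - bas f 0} := by
  haveI : NeZero f := ⟨hf⟩
  obtain ⟨m, rfl⟩ := ZMod.natCast_rightInverse.surjective k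
  induction m with
  | zero => simp
  | succ m ih =>
    have key : bas f ((m + 1 : ℕ) : ZMod f) - bas f 0 =
        bas f (m : ZMod f) * (bas f 1 - bas f 0) + (bas f (m : ZMod f) - bas f 0) := by
      rw [mul_sub, bas_mul, bas_mul, add_zero]
      push_cast
      ring
    rw [key]
    exact add_mem (Ideal.mul_mem_left _ _ (Ideal.subset_span rfl)) ih

lemma augIdeal_eq_span (f : ℕ) (hf : f ≠ 0) :
    augIdeal f = Ideal.span {bas f 1 - bas f 0} := by
  apply le_antisymm
  · intro p hp
    have hp' : aug f p = 0 := hp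
    have key : ∀ q : MonoidAlgebra ℤ (Multiplicative (ZMod f)),
        q - (aug f q) • (1 : MonoidAlgebra ℤ (Multiplicative (ZMod f)))
          ∈ Ideal.span {bas f 1 - bas f 0} := by
      intro q
      induction q using MonoidAlgebra.induction_on with
      | of g =>
        have : aug f (MonoidAlgebra.of ℤ (Multiplicative (ZMod f)) g) = 1 :=
          aug_bas f (Multiplicative.toAdd g)
        rw [this, one_smul, ← bas_zero f]
        exact bas_sub_mem_span f hf (Multiplicative.toAdd g)
      | add p q hp hq =>
        have : p + q - (aug f (p + q)) • 1 =
            (p - (aug f p) • 1) + (q - (aug f q) • 1) := by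
          rw [map_add]; module
        rw [this]; exact add_mem hp hq
      | smul r p hp =>
        have : r • p - (aug f (r • p)) • 1 = r • (p - (aug f p) • 1) := by
          rw [map_smul, smul_assoc, ← smul_sub]
        rw [this]
        exact Submodule.smul_of_tower_mem _ r hp
    have := key p
    rwa [hp', zero_smul, sub_zero] at this
  · rw [Ideal.span_le, Set.singleton_subset_iff]
    show aug f (bas f 1 - bas f 0) = 0
    rw [map_sub, aug_bas, aug_bas, sub_self]

set_option maxHeartbeats 1000000 in
set_option synthInstance.maxHeartbeats 400000 in
/-- For `x = x̃([1̄] − [0̄])` with `x̃ ≠ 0`, the quotient `K/xR` of the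
augmentation ideal by the ideal `xR` is isomorphic, as a module over `ℤ[ℤ/fℤ]`, to the
tensor product `(ℤ/x̃ℤ) ⊗_ℤ K`, the `ℤ/fℤ`-action being the one induced by the action
on the factor `K`. -/
theorem augIdeal_quotient_iso_tensor (f : ℕ) (hf : 1 < f) (xt : ℤ) (hx : xt ≠ 0) :
    Nonempty
      ((augIdeal f ⧸ (Submodule.comap (augIdeal f).subtype
            (Ideal.span {xt • (bas f 1 - bas f 0)})))
        ≃ₗ[MonoidAlgebra ℤ (Multiplicative (ZMod f))]
       ((augIdeal f) ⊗[ℤ] ZMod xt.natAbs)) := by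
  classical
  set R := MonoidAlgebra ℤ (Multiplicative (ZMod f)) with hR
  have hf0 : f ≠ 0 := by omega
  set g : R := bas f 1 - bas f 0 with hg
  set n : ℕ := xt.natAbs with hn
  haveI : NeZero n := ⟨Int.natAbs_ne_zero.mpr hx⟩
  set K : Ideal R := augIdeal f with hK
  -- the natural map K → K ⊗ ZMod n
  let φ : K →ₗ[R] (K ⊗[ℤ] ZMod n) :=
    { toFun := fun k => k ⊗ₜ[ℤ] (1 : ZMod n)
      map_add' := fun a b => TensorProduct.add_tmul a b 1
      map_smul' := fun r k => (TensorProduct.smul_tmul' r k (1 : ZMod n)).symm }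
  -- surjectivity
  have hsurj : Function.Surjective φ := by
    intro z
    induction z using TensorProduct.induction_on with
    | zero => exact ⟨0, by simp [φ]⟩
    | tmul k c =>
      refine ⟨(c.val : ℤ) • k, ?_⟩
      show ((c.val : ℤ) • k) ⊗ₜ[ℤ] (1 : ZMod n) = k ⊗ₜ[ℤ] c
      rw [TensorProduct.smul_tmul]
      congr 1
      rw [zsmul_eq_mul, mul_one]
      push_cast
      simp [ZMod.natCast_val, ZMod.cast_id]
    | add x y hx hy =>
      obtain ⟨a, ha⟩ := hx
      obtain ⟨b, hb⟩ := hy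
      exact ⟨a + b, by rw [map_add, ha, hb]⟩
  -- kernel computation
  have hker : LinearMap.ker φ =
      Submodule.comap K.subtype (Ideal.span {xt • g}) := by
    ext k
    simp only [LinearMap.mem_ker, Submodule.mem_comap]
    constructor
    · intro h
      -- use the equivalence K ⊗ ZMod n ≃ K ⧸ span{xt} • ⊤
      have hxt0 : ((xt : ℤ) : ZMod n) = 0 := by
        rw [ZMod.intCast_zmod_eq_zero_iff_dvd]
        exact Int.natAbs_dvd.mpr dvd_rfl
      let c2 : (ℤ ⧸ Ideal.span ({xt} : Set ℤ)) ≃ₗ[ℤ] ZMod n :=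
        (Int.quotientSpanEquivZMod xt).toAddEquiv.toIntLinearEquiv
      let E : (K ⊗[ℤ] ZMod n) ≃ₗ[ℤ] (K ⧸ (Ideal.span ({xt} : Set ℤ) • (⊤ : Submodule ℤ K))) :=
        (TensorProduct.congr (LinearEquiv.refl ℤ K) c2.symm).trans
          (TensorProduct.tensorQuotEquivQuotSMul K (Ideal.span ({xt} : Set ℤ)))
      have hE : E (k ⊗ₜ[ℤ] (1 : ZMod n)) = Submodule.Quotient.mk k := by
        have h1 : c2.symm (1 : ZMod n) = Ideal.Quotient.mk _ (1 : ℤ) := by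
          have : c2 (Ideal.Quotient.mk (Ideal.span ({xt} : Set ℤ)) (1 : ℤ)) = 1 := by
            simp [c2]
          rw [← this, LinearEquiv.symm_apply_apply]
        show (TensorProduct.tensorQuotEquivQuotSMul K (Ideal.span ({xt} : Set ℤ)))
            ((TensorProduct.congr (LinearEquiv.refl ℤ K) c2.symm) (k ⊗ₜ[ℤ] (1 : ZMod n)))
            = Submodule.Quotient.mk k
        rw [TensorProduct.congr_tmul, h1]
        simpa using TensorProduct.tensorQuotEquivQuotSMul_tmul_mk
          (M := K) (Ideal.span ({xt} : Set ℤ)) k (1 : ℤ)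
      have hk0 : (Submodule.Quotient.mk k :
          K ⧸ (Ideal.span ({xt} : Set ℤ) • (⊤ : Submodule ℤ K))) = 0 := by
        rw [← hE]
        show E (φ k) = 0
        rw [h, map_zero]
      have hkmem : k ∈ (Ideal.span ({xt} : Set ℤ) • (⊤ : Submodule ℤ K)) :=
        (Submodule.Quotient.mk_eq_zero _).mp hk0
      -- hence k = xt • y for some y in K
      have hrange : k ∈ LinearMap.range ((xt : ℤ) • (LinearMap.id : K →ₗ[ℤ] K)) := by
        refine Submodule.smul_induction_on hkmem ?_ ?_
        · intro r hr m _
          obtain ⟨c, hc⟩ := Ideal.mem_span_singleton'.mp hr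
          exact ⟨c • m, by simp [← hc, mul_smul, smul_comm c xt m]⟩
        · rintro a b ⟨u, hu⟩ ⟨v, hv⟩
          exact ⟨u + v, by rw [map_add, hu, hv]⟩
      obtain ⟨y, hy⟩ := hrange
      have hy' : (k : R) = xt • (y : R) := by
        have : xt • y = k := by simpa using hy
        rw [← this]; rfl
      -- y ∈ K = span{g}, so y = c * g
      have hyK : (y : R) ∈ Ideal.span {g} := by
        rw [← augIdeal_eq_span f hf0]; exact y.2
      obtain ⟨c, hc⟩ := Ideal.mem_span_singleton'.mp hyK
      apply Ideal.mem_span_singleton'.mpr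
      refine ⟨c, ?_⟩
      show c * (xt • g) = (k : R)
      rw [hy', ← hc, mul_smul_comm]
    · rintro h
      obtain ⟨c, hc⟩ := Ideal.mem_span_singleton'.mp h
      -- (k : R) = xt • (c * g) with c * g ∈ K
      have hcg : c * g ∈ K := by
        rw [hK, augIdeal_eq_span f hf0]
        exact Ideal.mul_mem_left _ _ (Ideal.subset_span rfl)
      have hkeq : k = xt • (⟨c * g, hcg⟩ : K) := by
        apply Subtype.ext
        show (k : R) = xt • (c * g)
        rw [mul_smul_comm] at hc
        exact hc.symm
      show k ⊗ₜ[ℤ] (1 : ZMod n) = 0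
      rw [hkeq]
      have : (xt • (⟨c * g, hcg⟩ : K)) ⊗ₜ[ℤ] (1 : ZMod n)
          = (⟨c * g, hcg⟩ : K) ⊗ₜ[ℤ] (xt • (1 : ZMod n)) := TensorProduct.smul_tmul _ _ _
      rw [this]
      have hxt0 : xt • (1 : ZMod n) = 0 := by
        rw [zsmul_eq_mul, mul_one]
        rw [ZMod.intCast_zmod_eq_zero_iff_dvd]
        exact Int.natAbs_dvd.mpr dvd_rfl
      rw [hxt0, TensorProduct.tmul_zero]
  exact ⟨(Submodule.quotEquivOfEq _ _ hker.symm).trans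
    (φ.quotKerEquivOfSurjective hsurj)⟩
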